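/- For the integral block ODE system, the difference of the output concentrations equals the scaled integral of the difference of the input concentrations: if x_{I+} and x_{I-} satisfy ∂t x_{I+} = r·x_{E+} − q·x_{I+}·x_{I−} and ∂t x_{I−} = r·x_{E−} − q·x_{I+}·x_{I−} with x_{I+}(0) = x_{I−}(0) = 0, then for all t ≥ 0, x_{I+}(t) − x_{I−}(t) = r·∫₀ᵗ (x_{E+}(τ) − x_{E−}(τ)) dτ. -/

import Mathlib

/-- Integral block correctness: the difference of the output concentrations equals
the scaled integral of the difference of the input concentrations. -/
theorem integral_block_correct
    (xEp xEm xIp xIm : ℝ → ℝ) (r q : ℝ)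
    (hr : 0 ≤ r) (hq : 0 < q)
    (hEp_cont : Continuous xEp) (hEm_cont : Continuous xEm)
    (hEp_nonneg : ∀ t, 0 ≤ t → 0 ≤ xEp t)
    (hEm_nonneg : ∀ t, 0 ≤ t → 0 ≤ xEm t)
    (hIp : ∀ t, 0 ≤ t → HasDerivAt xIp (r * xEp t - q * xIp t * xIm t) t)
    (hIm : ∀ t, 0 ≤ t → HasDerivAt xIm (r * xEm t - q * xIp t * xIm t) t)
    (hIp0 : xIp 0 = 0) (hIm0 : xIm 0 = 0) :
    ∀ t, 0 ≤ t → xIp t - xIm t = r * ∫ τ in (0:ℝ)..t, (xEp τ - xEm τ) := by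
  intro t ht
  have key : ∀ s ∈ Set.uIcc (0:ℝ) t,
      HasDerivAt (fun u => xIp u - xIm u) (r * (xEp s - xEm s)) s := by
    intro s hs
    rw [Set.uIcc_of_le ht] at hs
    have h := (hIp s hs.1).sub (hIm s hs.1)
    exact h.congr_deriv (by ring)
  have hint : IntervalIntegrable (fun s => r * (xEp s - xEm s)) MeasureTheory.volume 0 t :=
    (Continuous.intervalIntegrable (by continuity) 0 t)
  have := intervalIntegral.integral_eq_sub_of_hasDerivAt key hint
  rw [intervalIntegral.integral_const_mul] at this
  simp [hIp0, hIm0] at this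
  linarith [this]
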